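/- Weighted Poincaré inequality: Let $0\leq\alpha<2$, $\alpha+\beta<1$. Then for every $u\in H^1_{\alpha,\beta,0}(0,1)$, $$\int_0^1 |u|^2 x^{\beta}dx \leq \frac{1}{(2-\alpha)(1-\alpha-\beta)}\int_0^1 x^{\alpha+\beta}|u'|^2dx.$$ -/

import Mathlib

open MeasureTheory Set Filter Topology

theorem stmt5 (α β : ℝ) (hα : 0 ≤ α) (hα2 : α < 2) (hαβ : α + β < 1) (u u' : ℝ → ℝ)
    (hderiv : ∀ x ∈ Ioo (0:ℝ) 1, HasDerivAt u (u' x) x)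
    (hu : IntegrableOn (fun x => u x ^ 2 * x ^ β) (Ioo 0 1))
    (hint : IntegrableOn (fun x => x ^ (α + β) * u' x ^ 2) (Ioo 0 1))
    (hu0 : Tendsto u (𝓝[>] (0:ℝ)) (𝓝 0))
    (hu1 : Tendsto u (𝓝[<] (1:ℝ)) (𝓝 0)) :
    ∫ x in Ioo (0:ℝ) 1, u x ^ 2 * x ^ β ≤
      1 / ((2 - α) * (1 - α - β)) * ∫ x in Ioo (0:ℝ) 1, x ^ (α + β) * u' x ^ 2 := by
  have h1c : (0:ℝ) < 1 - (α + β) := by linarith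
  have h2a : (0:ℝ) < 2 - α := by linarith
  set c : ℝ := α + β with hc
  set I : ℝ := ∫ x in Ioo (0:ℝ) 1, x ^ c * u' x ^ 2 with hIdef
  have hInn : 0 ≤ I := setIntegral_nonneg measurableSet_Ioo fun t ht =>
    mul_nonneg (Real.rpow_nonneg ht.1.le _) (sq_nonneg _)
  -- measurability of u' on measurable subsets of Ioo 0 1
  have hu'meas : ∀ s : Set ℝ, s ⊆ Ioo (0:ℝ) 1 → MeasurableSet s →
      AEStronglyMeasurable u' (volume.restrict s) := by
    intro s hs hsm
    refine (measurable_deriv u).aestronglyMeasurable.congr ?_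
    filter_upwards [ae_restrict_mem hsm] with t ht
    exact (hderiv t (hs ht)).deriv
  -- key pointwise bound
  have key : ∀ x ∈ Ioo (0:ℝ) 1, u x ^ 2 ≤ x ^ (1 - c) / (1 - c) * I := by
    intro x hx
    have step : ∀ ε ∈ Ioo (0:ℝ) x, (u x - u ε) ^ 2 ≤ x ^ (1 - c) / (1 - c) * I := by
      intro ε hε
      have hε0 : 0 < ε := hε.1
      have hεx : ε < x := hε.2
      have hsub : Ioc ε x ⊆ Ioo (0:ℝ) 1 := fun t ht => ⟨hε0.trans ht.1, lt_of_le_of_lt ht.2 hx.2⟩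
      have hmeasu' := hu'meas (Ioc ε x) hsub measurableSet_Ioc
      have hB : IntegrableOn (fun t => t ^ c * u' t ^ 2) (Ioc ε x) := hint.mono_set hsub
      set A : ℝ := ∫ t in Ioc ε x, t ^ (-c) with hAdef
      set B : ℝ := ∫ t in Ioc ε x, t ^ c * u' t ^ 2 with hBdef
      have hBnn : 0 ≤ B := setIntegral_nonneg measurableSet_Ioc fun t ht =>
        mul_nonneg (Real.rpow_nonneg (hε0.trans ht.1).le _) (sq_nonneg _)
      have hAnn : 0 ≤ A := setIntegral_nonneg measurableSet_Ioc fun t ht =>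
        Real.rpow_nonneg (hε0.trans ht.1).le _
      -- Memℒp of g := t^{c/2} * u' t
      have hgmeas : AEStronglyMeasurable (fun t => t ^ (c/2) * u' t)
          (volume.restrict (Ioc ε x)) := by
        refine AEStronglyMeasurable.mul ?_ hmeasu'
        exact (by fun_prop : Measurable fun t : ℝ => t ^ (c/2)).aestronglyMeasurable
      have hgsq : (fun t => t ^ c * u' t ^ 2)
          =ᵐ[volume.restrict (Ioc ε x)] (fun t => (t ^ (c/2) * u' t) ^ 2) := by
        filter_upwards [ae_restrict_mem measurableSet_Ioc] with t ht
        have ht0 : (0:ℝ) < t := hε0.trans ht.1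
        rw [mul_pow, ← Real.rpow_natCast (t ^ (c/2)) 2, ← Real.rpow_mul ht0.le]
        norm_num
      have hgL2 : MemLp (fun t => t ^ (c/2) * u' t) 2 (volume.restrict (Ioc ε x)) := by
        rw [memLp_two_iff_integrable_sq hgmeas]
        exact hB.congr hgsq
      -- Memℒp of f := t^{-(c/2)}
      have hAint : IntegrableOn (fun t : ℝ => t ^ (-c)) (Ioc ε x) := by
        refine (ContinuousOn.integrableOn_Icc ?_).mono_set Ioc_subset_Icc_self
        intro t ht
        exact (Real.continuousAt_rpow_const t (-c)
          (Or.inl (hε0.trans_le ht.1).ne')).continuousWithinAt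
      have hfsq : (fun t : ℝ => t ^ (-c))
          =ᵐ[volume.restrict (Ioc ε x)] (fun t => (t ^ (-(c/2))) ^ 2) := by
        filter_upwards [ae_restrict_mem measurableSet_Ioc] with t ht
        have ht0 : (0:ℝ) < t := hε0.trans ht.1
        rw [← Real.rpow_natCast (t ^ (-(c/2))) 2, ← Real.rpow_mul ht0.le]
        norm_num
      have hfL2 : MemLp (fun t : ℝ => t ^ (-(c/2))) 2 (volume.restrict (Ioc ε x)) := by
        rw [memLp_two_iff_integrable_sq
          (by fun_prop : Measurable fun t : ℝ => t ^ (-(c/2))).aestronglyMeasurable]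
        exact hAint.congr hfsq
      -- u' is integrable on Ioc ε x
      have hu'int : IntegrableOn u' (Ioc ε x) := by
        have : IsFiniteMeasure (volume.restrict (Ioc ε x)) :=
          ⟨by rw [Measure.restrict_apply_univ]; exact measure_Ioc_lt_top⟩
        have hu'L2 : MemLp u' 2 (volume.restrict (Ioc ε x)) := by
          rw [memLp_two_iff_integrable_sq hmeasu']
          have heq : (fun t => t ^ (-c) * (t ^ c * u' t ^ 2))
              =ᵐ[volume.restrict (Ioc ε x)] (fun t => u' t ^ 2) := by
            filter_upwards [ae_restrict_mem measurableSet_Ioc] with t ht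
            have ht0 : (0:ℝ) < t := hε0.trans ht.1
            rw [← mul_assoc, ← Real.rpow_add ht0]
            norm_num
          refine Integrable.congr ?_ heq
          refine hB.bdd_mul (c := max (ε ^ (-c)) (x ^ (-c)))
            (by fun_prop : Measurable fun t : ℝ => t ^ (-c)).aestronglyMeasurable ?_
          filter_upwards [ae_restrict_mem measurableSet_Ioc] with t ht
          have ht0 : (0:ℝ) < t := hε0.trans ht.1
          rw [Real.norm_eq_abs, abs_of_nonneg (Real.rpow_nonneg ht0.le _)]
          rcases le_or_gt 0 (-c) with h | h
          · exact le_max_of_le_right (Real.rpow_le_rpow ht0.le ht.2 h)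
          · exact le_max_of_le_left (Real.rpow_le_rpow_of_nonpos hε0 ht.1.le h.le)
        exact hu'L2.integrable one_le_two
      -- fundamental theorem of calculus
      have hftc : ∫ t in ε..x, u' t = u x - u ε := by
        refine intervalIntegral.integral_eq_sub_of_hasDerivAt (fun t ht => ?_) ?_
        · rw [uIcc_of_le hεx.le] at ht
          exact hderiv t ⟨hε0.trans_le ht.1, lt_of_le_of_lt ht.2 hx.2⟩
        · rw [intervalIntegrable_iff_integrableOn_Ioc_of_le hεx.le]
          exact hu'int
      -- Cauchy–Schwarz
      have hCS : |u x - u ε| ≤ A ^ (1/2 : ℝ) * B ^ (1/2 : ℝ) := by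
        rw [← hftc, intervalIntegral.integral_of_le hεx.le]
        calc |∫ t in Ioc ε x, u' t| ≤ ∫ t in Ioc ε x, ‖u' t‖ :=
              norm_integral_le_integral_norm u'
          _ = ∫ t in Ioc ε x, ‖(fun t : ℝ => t ^ (-(c/2))) t‖ *
                ‖(fun t => t ^ (c/2) * u' t) t‖ := by
              refine integral_congr_ae ?_
              filter_upwards [ae_restrict_mem measurableSet_Ioc] with t ht
              have ht0 : (0:ℝ) < t := hε0.trans ht.1
              simp only [Real.norm_eq_abs, abs_mul]
              rw [abs_of_nonneg (Real.rpow_nonneg ht0.le _),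
                abs_of_nonneg (Real.rpow_nonneg ht0.le _), ← mul_assoc,
                ← Real.rpow_add ht0]
              norm_num
          _ ≤ (∫ t in Ioc ε x, ‖(fun t : ℝ => t ^ (-(c/2))) t‖ ^ (2:ℝ)) ^ (1/2 : ℝ) *
                (∫ t in Ioc ε x, ‖(fun t => t ^ (c/2) * u' t) t‖ ^ (2:ℝ)) ^ (1/2 : ℝ) := by
              refine integral_mul_norm_le_Lp_mul_Lq Real.HolderConjugate.two_two ?_ ?_
              · simpa [ENNReal.ofReal_ofNat] using hfL2
              · simpa [ENNReal.ofReal_ofNat] using hgL2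
          _ = A ^ (1/2 : ℝ) * B ^ (1/2 : ℝ) := by
              congr 1
              · congr 1
                refine integral_congr_ae ?_
                filter_upwards [hfsq] with t htf
                rw [Real.norm_eq_abs, Real.rpow_two, sq_abs]
                exact htf.symm
              · congr 1
                refine integral_congr_ae ?_
                filter_upwards [hgsq] with t htg
                rw [Real.norm_eq_abs, Real.rpow_two, sq_abs]
                exact htg.symm
      -- conclude the step
      have hsq : (u x - u ε) ^ 2 ≤ A * B := by
        have h1 : (u x - u ε) ^ 2 = |u x - u ε| ^ 2 := (sq_abs _).symm
        have h2 : |u x - u ε| ^ 2 ≤ (A ^ (1/2 : ℝ) * B ^ (1/2 : ℝ)) ^ 2 :=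
          pow_le_pow_left₀ (abs_nonneg _) hCS 2
        have h3 : (A ^ (1/2 : ℝ) * B ^ (1/2 : ℝ)) ^ 2 = A * B := by
          rw [mul_pow, ← Real.rpow_natCast (A ^ (1/2:ℝ)) 2, ← Real.rpow_natCast (B ^ (1/2:ℝ)) 2,
            ← Real.rpow_mul hAnn, ← Real.rpow_mul hBnn]
          norm_num
        rw [h1]; rw [h3] at h2; exact h2
      have hA_le : A ≤ x ^ (1 - c) / (1 - c) := by
        have : A = (x ^ (-c + 1) - ε ^ (-c + 1)) / (-c + 1) := by
          rw [hAdef, ← intervalIntegral.integral_of_le hεx.le,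
            integral_rpow (Or.inl (by linarith : (-1:ℝ) < -c))]
        rw [this]
        have hexp : -c + 1 = 1 - c := by ring
        rw [hexp]
        have hε1 : 0 ≤ ε ^ (1 - c) := Real.rpow_nonneg hε0.le _
        exact (div_le_div_iff_of_pos_right h1c).mpr (by linarith)
      have hB_le : B ≤ I := by
        refine setIntegral_mono_set hint ?_ (HasSubset.Subset.eventuallyLE hsub)
        filter_upwards [ae_restrict_mem measurableSet_Ioo] with t ht
        exact mul_nonneg (Real.rpow_nonneg ht.1.le _) (sq_nonneg _)
      calc (u x - u ε) ^ 2 ≤ A * B := hsq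
        _ ≤ x ^ (1 - c) / (1 - c) * I := by
            refine mul_le_mul hA_le hB_le hBnn ?_
            exact div_nonneg (Real.rpow_nonneg (hx.1.le) _) h1c.le
    have hlim : Tendsto (fun ε => (u x - u ε) ^ 2) (𝓝[>] (0:ℝ)) (𝓝 ((u x - 0) ^ 2)) :=
      (tendsto_const_nhds.sub hu0).pow 2
    have := le_of_tendsto hlim (eventually_of_mem (Ioo_mem_nhdsGT hx.1) step)
    simpa using this
  -- integrate the pointwise bound
  have hIoo_rpow : IntegrableOn (fun t : ℝ => t ^ (1 - α)) (Ioo (0:ℝ) 1) := by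
    have h := intervalIntegral.intervalIntegrable_rpow' (a := (0:ℝ)) (b := 1)
      (by linarith : (-1:ℝ) < 1 - α)
    rw [intervalIntegrable_iff_integrableOn_Ioc_of_le zero_le_one] at h
    exact h.mono_set Ioo_subset_Ioc_self
  have hmono : ∫ x in Ioo (0:ℝ) 1, u x ^ 2 * x ^ β ≤
      ∫ x in Ioo (0:ℝ) 1, I / (1 - c) * x ^ (1 - α) := by
    refine setIntegral_mono_on hu (hIoo_rpow.const_mul _) measurableSet_Ioo ?_
    intro t ht
    have ht0 : (0:ℝ) < t := ht.1
    have h1 : u t ^ 2 * t ^ β ≤ (t ^ (1 - c) / (1 - c) * I) * t ^ β :=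
      mul_le_mul_of_nonneg_right (key t ht) (Real.rpow_nonneg ht0.le _)
    refine h1.trans_eq ?_
    have hexp : 1 - c + β = 1 - α := by rw [hc]; ring
    rw [div_mul_eq_mul_div, div_mul_eq_mul_div, mul_right_comm, ← Real.rpow_add ht0, hexp]
    ring
  have hval : ∫ x in Ioo (0:ℝ) 1, I / (1 - c) * x ^ (1 - α) = I / (1 - c) * (1 / (2 - α)) := by
    rw [integral_const_mul]
    congr 1
    rw [← integral_Ioc_eq_integral_Ioo, ← intervalIntegral.integral_of_le zero_le_one,
      integral_rpow (Or.inl (by linarith : (-1:ℝ) < 1 - α)), Real.one_rpow,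
      Real.zero_rpow (by linarith : 1 - α + 1 ≠ 0)]
    ring_nf
  calc ∫ x in Ioo (0:ℝ) 1, u x ^ 2 * x ^ β
      ≤ ∫ x in Ioo (0:ℝ) 1, I / (1 - c) * x ^ (1 - α) := hmono
    _ = I / (1 - c) * (1 / (2 - α)) := hval
    _ = 1 / ((2 - α) * (1 - α - β)) * I := by
        have hne1 : (1:ℝ) - α - β ≠ 0 := by linarith
        have hne2 : (2:ℝ) - α ≠ 0 := by linarith
        rw [hc]
        field_simp
        ring_nf
        field_simp
        ring
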